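/- Let 𝒞 be a 3XOR instance with n variables and m = cn equations, where c ≥ 1, let δ ≥ 0, and let π : V(G_𝒞) → V(G_{homog(𝒞)}) be a bijection with GI(G_𝒞, G_{homog(𝒞)}; π) ≥ 1 − δ. Define A = {i ∈ [m] : π(V_{C_i}) = V_{homog(C_{i'})} for some i' ∈ [m]} and B = {j ∈ [n] : π(V_{x_j}) = V_{x_{j'}} for some j' ∈ [n]}. Then |A| ≥ (1 − 19δ)m and |B| ≥ (1 − 95cδ)n. -/

import Mathlib

open scoped Classical

noncomputable section

namespace Giso

/-- The finset of edges of a simple graph on a finite vertex type. -/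
def edges {V : Type*} [Fintype V] (G : SimpleGraph V) : Finset (Sym2 V) :=
  Finset.univ.filter fun e => e ∈ G.edgeSet

/-- The fraction of edges of `G` carried to edges of `H` by the bijection `π`. -/
def GIval {V W : Type*} [Fintype V] [Fintype W] (G : SimpleGraph V) (H : SimpleGraph W)
    (π : V ≃ W) : ℝ :=
  (((edges G).filter fun e => Sym2.map (fun x => π x) e ∈ edges H).card : ℝ) /
    max ((edges G).card : ℝ) ((edges H).card : ℝ)

/-- A 3XOR equation on `n` variables: three distinct variable indices and a
right-hand side in `Z₂`. -/
structure XorEq (n : ℕ) where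
  idx : Fin 3 → Fin n
  rhs : ZMod 2
  inj : Function.Injective idx

/-- A 3XOR instance: a list of `m` equations. -/
abbrev XorInstance (n m : ℕ) := Fin m → XorEq n

/-- The homogeneous version of an equation: the right-hand side is replaced by `0`. -/
def XorEq.homog {n : ℕ} (C : XorEq n) : XorEq n := ⟨C.idx, 0, C.inj⟩

/-- The homogeneous version of an instance. -/
def homogInst {n m : ℕ} (𝒞 : XorInstance n m) : XorInstance n m := fun i => (𝒞 i).homog

/-- The satisfying assignments of an equation (there are four of them). -/
abbrev SatAssign {n : ℕ} (C : XorEq n) : Type :=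
  {α : Fin 3 → ZMod 2 // α 0 + α 1 + α 2 = C.rhs}

/-- Vertices of the gadget graph `G_𝒞`. -/
abbrev GVert {n m : ℕ} (𝒞 : XorInstance n m) : Type :=
  (Fin n × ZMod 2) ⊕ (Σ i : Fin m, SatAssign (𝒞 i))

/-- The gadget graph `G_𝒞` associated to a 3XOR instance `𝒞`. -/
def gadgetGraph {n m : ℕ} (𝒞 : XorInstance n m) : SimpleGraph (GVert 𝒞) :=
  SimpleGraph.fromRel fun u v =>
    (∃ (j : Fin n) (a a' : ZMod 2), u = Sum.inl (j, a) ∧ v = Sum.inl (j, a')) ∨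
    (∃ (i : Fin m) (α α' : SatAssign (𝒞 i)), u = Sum.inr ⟨i, α⟩ ∧ v = Sum.inr ⟨i, α'⟩) ∨
    (∃ (i : Fin m) (α : SatAssign (𝒞 i)) (t : Fin 3),
      u = Sum.inl ((𝒞 i).idx t, α.1 t) ∧ v = Sum.inr ⟨i, α⟩)

/-- The set `V_C` of constraint vertices of equation `i` in `G_𝒞`. -/
def VC {n m : ℕ} (𝒞 : XorInstance n m) (i : Fin m) : Finset (GVert 𝒞) :=
  Finset.univ.filter fun v => ∃ α : SatAssign (𝒞 i), v = Sum.inr ⟨i, α⟩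

/-- The set `V_x` of the two variable vertices of variable `j` in `G_𝒞`. -/
def Vx {n m : ℕ} (𝒞 : XorInstance n m) (j : Fin n) : Finset (GVert 𝒞) :=
  Finset.univ.filter fun v => ∃ a : ZMod 2, v = Sum.inl (j, a)

variable {n m : ℕ}

/-- Equiv between satisfying assignments and pairs. -/
def satEquiv (C : XorEq n) : SatAssign C ≃ ZMod 2 × ZMod 2 where
  toFun α := (α.1 0, α.1 1)
  invFun p := ⟨![p.1, p.2, C.rhs - p.1 - p.2], by simp⟩
  left_inv α := by
    apply Subtype.ext
    funext r
    have h := α.2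
    fin_cases r <;> simp
    linear_combination -h
  right_inv p := by simp

lemma card_satAssign (C : XorEq n) : Fintype.card (SatAssign C) = 4 := by
  rw [Fintype.card_congr (satEquiv C)]
  simp

lemma VC_eq (𝒞 : XorInstance n m) (i : Fin m) :
    VC 𝒞 i = Finset.univ.image (fun α : SatAssign (𝒞 i) => (Sum.inr ⟨i, α⟩ : GVert 𝒞)) := by
  ext v
  simp [VC, eq_comm]

lemma card_VC (𝒞 : XorInstance n m) (i : Fin m) : (VC 𝒞 i).card = 4 := by
  rw [VC_eq, Finset.card_image_of_injective _ (fun a b h => by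
    simpa using h)]
  simp [card_satAssign]

lemma Vx_eq (𝒞 : XorInstance n m) (j : Fin n) :
    Vx 𝒞 j = {(Sum.inl (j, 0) : GVert 𝒞), Sum.inl (j, 1)} := by
  ext v
  constructor
  · intro hv
    simp [Vx] at hv
    obtain ⟨a, rfl⟩ := hv
    have h2 : ∀ b : ZMod 2, b = 0 ∨ b = 1 := by decide
    rcases h2 a with rfl | rfl <;> simp
  · intro hv
    simp [Vx]
    rcases Finset.mem_insert.1 hv with rfl | h
    · exact ⟨0, rfl⟩
    · simp at h; subst h; exact ⟨1, rfl⟩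

lemma zmod2_cases : ∀ x y z : ZMod 2, y ≠ x → z ≠ x → y = z := by decide

lemma satassign_eq {C : XorEq n} {α β : SatAssign C} {t s : Fin 3} (hts : t ≠ s)
    (h1 : α.1 t = β.1 t) (h2 : α.1 s = β.1 s) : α = β := by
  have hsum : α.1 0 + α.1 1 + α.1 2 = β.1 0 + β.1 1 + β.1 2 := α.2.trans β.2.symm
  have f0 : ∀ h, (⟨0, h⟩ : Fin 3) = 0 := fun _ => rfl
  have f1 : ∀ h, (⟨1, h⟩ : Fin 3) = 1 := fun _ => rfl
  have f2 : ∀ h, (⟨2, h⟩ : Fin 3) = 2 := fun _ => rfl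
  apply Subtype.ext; funext r
  fin_cases t <;> fin_cases s <;> fin_cases r <;>
    first
      | exact absurd rfl hts
      | (simp only [f0, f1, f2] at h1 h2 ⊢
         first
           | exact h1
           | exact h2
           | linear_combination hsum - h1 - h2)

lemma satassign_third {C : XorEq n} {α β γ : SatAssign C} {t : Fin 3}
    (h1 : α.1 t = β.1 t) (h2 : α.1 t = γ.1 t) (d1 : α ≠ β) (d2 : α ≠ γ) : β = γ := by
  have key : ∀ s : Fin 3, s ≠ t → β.1 s = γ.1 s := by
    intro s hs
    have hb : β.1 s ≠ α.1 s := fun h => d1 (satassign_eq hs.symm h1 h.symm)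
    have hg : γ.1 s ≠ α.1 s := fun h => d2 (satassign_eq hs.symm h2 h.symm)
    exact zmod2_cases _ _ _ hb hg
  have ht : β.1 t = γ.1 t := h1.symm.trans h2
  obtain ⟨s, hs⟩ : ∃ s : Fin 3, s ≠ t := by
    fin_cases t
    · exact ⟨1, by decide⟩
    · exact ⟨0, by decide⟩
    · exact ⟨0, by decide⟩
  exact satassign_eq hs.symm ht (key s hs)

lemma mem_edges {V : Type*} [Fintype V] {G : SimpleGraph V} {e : Sym2 V} :
    e ∈ edges G ↔ e ∈ G.edgeSet := by simp [edges]

section adj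
variable {𝒞 : XorInstance n m}

lemma adj_inr_mk {i : Fin m} {α β : SatAssign (𝒞 i)} (h : α ≠ β) :
    (gadgetGraph 𝒞).Adj (Sum.inr ⟨i, α⟩) (Sum.inr ⟨i, β⟩) := by
  rw [gadgetGraph, SimpleGraph.fromRel_adj]
  exact ⟨by simp [h], Or.inl (Or.inr (Or.inl ⟨i, α, β, rfl, rfl⟩))⟩

lemma adj_inl_mk {j : Fin n} {a a' : ZMod 2} (h : a ≠ a') :
    (gadgetGraph 𝒞).Adj (Sum.inl (j, a)) (Sum.inl (j, a')) := by
  rw [gadgetGraph, SimpleGraph.fromRel_adj]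
  exact ⟨by simp [h], Or.inl (Or.inl ⟨j, a, a', rfl, rfl⟩)⟩

lemma adj_mk_var {i : Fin m} {α : SatAssign (𝒞 i)} (t : Fin 3) :
    (gadgetGraph 𝒞).Adj (Sum.inl ((𝒞 i).idx t, α.1 t)) (Sum.inr ⟨i, α⟩) := by
  rw [gadgetGraph, SimpleGraph.fromRel_adj]
  exact ⟨by simp, Or.inl (Or.inr (Or.inr ⟨i, α, t, rfl, rfl⟩))⟩

lemma adj_inr_inr {i i' : Fin m} {α : SatAssign (𝒞 i)} {β : SatAssign (𝒞 i')}
    (h : (gadgetGraph 𝒞).Adj (Sum.inr ⟨i, α⟩) (Sum.inr ⟨i', β⟩)) : i = i' := by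
  rw [gadgetGraph, SimpleGraph.fromRel_adj] at h
  obtain ⟨hne, h⟩ := h
  rcases h with (⟨j,a,a',h1,h2⟩|⟨i0,α0,α0',h1,h2⟩|⟨i0,α0,t,h1,h2⟩)|
    (⟨j,a,a',h1,h2⟩|⟨i0,α0,α0',h1,h2⟩|⟨i0,α0,t,h1,h2⟩) <;>
    simp_all

lemma adj_inl_inl {j j' : Fin n} {a a' : ZMod 2}
    (h : (gadgetGraph 𝒞).Adj (Sum.inl (j, a)) (Sum.inl (j', a'))) : j = j' ∧ a ≠ a' := by
  rw [gadgetGraph, SimpleGraph.fromRel_adj] at h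
  obtain ⟨hne, h⟩ := h
  have hne' : ¬(j = j' ∧ a = a') := by
    intro ⟨rfl, rfl⟩; exact hne rfl
  rcases h with (⟨j0,b,b',h1,h2⟩|⟨i0,α0,α0',h1,h2⟩|⟨i0,α0,t,h1,h2⟩)|
    (⟨j0,b,b',h1,h2⟩|⟨i0,α0,α0',h1,h2⟩|⟨i0,α0,t,h1,h2⟩) <;>
    simp_all

lemma adj_inl_inr {j : Fin n} {a : ZMod 2} {i : Fin m} {α : SatAssign (𝒞 i)}
    (h : (gadgetGraph 𝒞).Adj (Sum.inl (j, a)) (Sum.inr ⟨i, α⟩)) :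
    ∃ t : Fin 3, (𝒞 i).idx t = j ∧ α.1 t = a := by
  rw [gadgetGraph, SimpleGraph.fromRel_adj] at h
  obtain ⟨hne, h⟩ := h
  rcases h with (⟨j0,b,b',h1,h2⟩|⟨i0,α0,α0',h1,h2⟩|⟨i0,α0,t,h1,h2⟩)|
    (⟨j0,b,b',h1,h2⟩|⟨i0,α0,α0',h1,h2⟩|⟨i0,α0,t,h1,h2⟩) <;>
    simp_all
  obtain ⟨rfl, h⟩ := h2
  rw [heq_eq_eq] at h
  subst h
  exact ⟨t, rfl, rfl⟩

end adj

lemma card_edges_le (𝒟 : XorInstance n m) :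
    (edges (gadgetGraph 𝒟)).card ≤ 18 * m + n := by
  classical
  set E1 : Finset (Sym2 (GVert 𝒟)) :=
    Finset.univ.image (fun j : Fin n => s(Sum.inl (j, 0), Sum.inl (j, 1))) with hE1
  set E2 : Finset (Sym2 (GVert 𝒟)) :=
    Finset.univ.image
      (fun p : Σ i : Fin m, {e : Sym2 (SatAssign (𝒟 i)) // ¬ e.IsDiag} =>
        Sym2.map (fun α => (Sum.inr ⟨p.1, α⟩ : GVert 𝒟)) p.2.1) with hE2
  set E3 : Finset (Sym2 (GVert 𝒟)) :=
    Finset.univ.image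
      (fun p : (Σ i : Fin m, SatAssign (𝒟 i)) × Fin 3 =>
        s(Sum.inl ((𝒟 p.1.1).idx p.2, p.1.2.1 p.2), Sum.inr ⟨p.1.1, p.1.2⟩)) with hE3
  have hsub : edges (gadgetGraph 𝒟) ⊆ E1 ∪ E2 ∪ E3 := by
    intro e he
    rw [mem_edges] at he
    induction e using Sym2.ind with
    | _ u v =>
    rw [SimpleGraph.mem_edgeSet] at he
    have hone : ∀ x : ZMod 2, x ≠ 0 → x = 1 := by decide
    have hzero : ∀ x : ZMod 2, x ≠ 1 → x = 0 := by decide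
    match u, v with
    | Sum.inl (j, a), Sum.inl (j', a') =>
      obtain ⟨rfl, hne⟩ := adj_inl_inl he
      refine Finset.mem_union_left _ (Finset.mem_union_left _ ?_)
      rw [hE1, Finset.mem_image]
      refine ⟨j, Finset.mem_univ _, ?_⟩
      by_cases ha : a = 0
      · subst ha
        rw [hone a' (Ne.symm hne)]
      · have h1' : a = 1 := hone a ha
        subst h1'
        have h0' : a' = 0 := hzero a' (Ne.symm hne)
        subst h0'
        exact Sym2.eq_swap
    | Sum.inl (j, a), Sum.inr ⟨i, α⟩ =>
      obtain ⟨t, rfl, rfl⟩ := adj_inl_inr he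
      refine Finset.mem_union_right _ ?_
      rw [hE3, Finset.mem_image]
      exact ⟨(⟨i, α⟩, t), Finset.mem_univ _, rfl⟩
    | Sum.inr ⟨i, α⟩, Sum.inl (j, a) =>
      obtain ⟨t, rfl, rfl⟩ := adj_inl_inr he.symm
      refine Finset.mem_union_right _ ?_
      rw [hE3, Finset.mem_image]
      exact ⟨(⟨i, α⟩, t), Finset.mem_univ _, Sym2.eq_swap⟩
    | Sum.inr ⟨i, α⟩, Sum.inr ⟨i', β⟩ =>
      obtain rfl := adj_inr_inr he
      have hne : α ≠ β := by
        intro h; subst h; exact (gadgetGraph 𝒟).irrefl he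
      refine Finset.mem_union_left _ (Finset.mem_union_right _ ?_)
      rw [hE2, Finset.mem_image]
      exact ⟨⟨i, ⟨s(α, β), by simp [hne]⟩⟩, Finset.mem_univ _, rfl⟩
  have h1 : E1.card ≤ n := le_trans Finset.card_image_le (by simp)
  have h2 : E2.card ≤ 6 * m := by
    refine le_trans Finset.card_image_le ?_
    rw [Finset.card_univ, Fintype.card_sigma]
    have : ∀ i : Fin m, Fintype.card {e : Sym2 (SatAssign (𝒟 i)) // ¬ e.IsDiag} = 6 := by
      intro i
      rw [Sym2.card_subtype_not_diag, card_satAssign]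
      decide
    simp [this, Finset.sum_const, mul_comm]
  have h3 : E3.card ≤ 12 * m := by
    refine le_trans Finset.card_image_le ?_
    rw [Finset.card_univ, Fintype.card_prod, Fintype.card_sigma]
    simp only [card_satAssign, Finset.sum_const, Finset.card_univ, Fintype.card_fin,
      smul_eq_mul, Fintype.card_fin]
    exact Nat.le_of_eq (by ring)
  calc (edges (gadgetGraph 𝒟)).card ≤ (E1 ∪ E2 ∪ E3).card := Finset.card_le_card hsub
    _ ≤ E1.card + E2.card + E3.card :=
        le_trans (Finset.card_union_le _ _) (by gcongr; exact Finset.card_union_le _ _)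
    _ ≤ 18 * m + n := by omega

lemma clique4 (𝒟 : XorInstance n m) (S : Finset (GVert 𝒟)) (h4 : S.card = 4)
    (hadj : ∀ u ∈ S, ∀ v ∈ S, u ≠ v → (gadgetGraph 𝒟).Adj u v) :
    ∃ i : Fin m, S = VC 𝒟 i := by
  classical
  -- Step 1: no variable vertex in S
  have hinr : ∀ v ∈ S, ∀ j a, v ≠ Sum.inl (j, a) := by
    intro v hv j a hveq
    subst hveq
    set x : GVert 𝒟 := Sum.inl (j, a) with hx
    have hS' : (S.erase x).card = 3 := by rw [Finset.card_erase_of_mem hv, h4]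
    obtain ⟨w1, w2, w3, d12, d13, d23, hSE⟩ := Finset.card_eq_three.1 hS'
    have hmemS : ∀ w ∈ S.erase x, w ∈ S ∧ w ≠ x := fun w hw =>
      ⟨Finset.mem_of_mem_erase hw, Finset.ne_of_mem_erase hw⟩
    have hadjx : ∀ w ∈ S.erase x, (gadgetGraph 𝒟).Adj x w := by
      intro w hw
      exact hadj x hv w (hmemS w hw).1 (Ne.symm (hmemS w hw).2)
    have noinl : ∀ w ∈ S.erase x, ∀ w' ∈ S.erase x, w ≠ w' →
        ∀ p : Fin n × ZMod 2, w ≠ Sum.inl p := by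
      intro w hw w' hw' hne p hweq
      subst hweq
      obtain ⟨hj, ha⟩ := adj_inl_inl (hadjx _ hw)
      obtain ⟨j', a'⟩ := p
      simp only at hj ha
      subst hj
      have hadjw : (gadgetGraph 𝒟).Adj (Sum.inl (j, a')) w' :=
        hadj _ (hmemS _ hw).1 _ (hmemS _ hw').1 hne
      match w' with
      | Sum.inl (j2, b) =>
        obtain ⟨hj2, hb⟩ := adj_inl_inl (hadjx _ hw')
        obtain ⟨hj2', hb'⟩ := adj_inl_inl hadjw
        exact hb' (zmod2_cases a a' b (Ne.symm ha) (Ne.symm hb))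
      | Sum.inr ⟨i, β⟩ =>
        obtain ⟨t, ht, hβ⟩ := adj_inl_inr (hadjx _ hw')
        obtain ⟨t', ht', hβ'⟩ := adj_inl_inr hadjw
        have : t = t' := (𝒟 i).inj (ht.trans ht'.symm)
        subst this
        exact ha (hβ.symm.trans hβ')
    have hw1 := Finset.mem_insert_self w1 {w2, w3}
    have hw2 : w2 ∈ ({w1, w2, w3} : Finset (GVert 𝒟)) := by simp
    have hw3 : w3 ∈ ({w1, w2, w3} : Finset (GVert 𝒟)) := by simp
    rw [← hSE] at hw1 hw2 hw3
    -- all three are constraint vertices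
    obtain ⟨⟨i1, β1⟩, hwe1⟩ : ∃ p, w1 = Sum.inr p := by
      match w1 with
      | Sum.inl p => exact absurd rfl (noinl _ hw1 _ hw2 d12 p)
      | Sum.inr p => exact ⟨p, rfl⟩
    obtain ⟨⟨i2, β2⟩, hwe2⟩ : ∃ p, w2 = Sum.inr p := by
      match w2 with
      | Sum.inl p => exact absurd rfl (noinl _ hw2 _ hw1 d12.symm p)
      | Sum.inr p => exact ⟨p, rfl⟩
    obtain ⟨⟨i3, β3⟩, hwe3⟩ : ∃ p, w3 = Sum.inr p := by
      match w3 with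
      | Sum.inl p => exact absurd rfl (noinl _ hw3 _ hw1 d13.symm p)
      | Sum.inr p => exact ⟨p, rfl⟩
    subst hwe1 hwe2 hwe3
    have hadj12 : (gadgetGraph 𝒟).Adj (Sum.inr ⟨i1, β1⟩) (Sum.inr ⟨i2, β2⟩) :=
      hadj _ (hmemS _ hw1).1 _ (hmemS _ hw2).1 d12
    have hadj13 : (gadgetGraph 𝒟).Adj (Sum.inr ⟨i1, β1⟩) (Sum.inr ⟨i3, β3⟩) :=
      hadj _ (hmemS _ hw1).1 _ (hmemS _ hw3).1 d13
    obtain rfl := adj_inr_inr hadj12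
    obtain rfl := adj_inr_inr hadj13
    obtain ⟨t1, ht1, hb1⟩ := adj_inl_inr (hadjx _ hw1)
    obtain ⟨t2, ht2, hb2⟩ := adj_inl_inr (hadjx _ hw2)
    obtain ⟨t3, ht3, hb3⟩ := adj_inl_inr (hadjx _ hw3)
    obtain rfl : t1 = t2 := (𝒟 i1).inj (ht1.trans ht2.symm)
    obtain rfl : t1 = t3 := (𝒟 i1).inj (ht1.trans ht3.symm)
    have db12 : β1 ≠ β2 := fun h => d12 (by rw [h])
    have db13 : β1 ≠ β3 := fun h => d13 (by rw [h])
    have : β2 = β3 :=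
      satassign_third (hb1.trans hb2.symm) (hb1.trans hb3.symm) db12 db13
    exact d23 (by rw [this])
  -- Step 2: S is a constraint clique
  have hpos : 0 < S.card := by omega
  obtain ⟨v0, hv0⟩ := Finset.card_pos.1 hpos
  obtain ⟨⟨i0, α0⟩, rfl⟩ : ∃ p, v0 = Sum.inr p := by
    match v0 with
    | Sum.inl p => exact absurd rfl (hinr _ hv0 p.1 p.2)
    | Sum.inr p => exact ⟨p, rfl⟩
  have hsub : S ⊆ VC 𝒟 i0 := by
    intro v hv
    obtain ⟨⟨i, α⟩, rfl⟩ : ∃ p, v = Sum.inr p := by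
      match v with
      | Sum.inl p => exact absurd rfl (hinr _ hv p.1 p.2)
      | Sum.inr p => exact ⟨p, rfl⟩
    by_cases hvv : (Sum.inr ⟨i, α⟩ : GVert 𝒟) = Sum.inr ⟨i0, α0⟩
    · rw [hvv]
      exact Finset.mem_filter.2 ⟨Finset.mem_univ _, α0, rfl⟩
    · obtain rfl := adj_inr_inr (hadj _ hv _ hv0 hvv)
      exact Finset.mem_filter.2 ⟨Finset.mem_univ _, α, rfl⟩
  exact ⟨i0, Finset.eq_of_subset_of_card_le hsub (by rw [card_VC, h4])⟩


lemma inr_index_eq {𝒞 : XorInstance n m} {i i' : Fin m} {α : SatAssign (𝒞 i)}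
    {β : SatAssign (𝒞 i')} (h : (Sum.inr ⟨i, α⟩ : GVert 𝒞) = Sum.inr ⟨i', β⟩) : i = i' := by
  injection h with h
  exact congrArg Sigma.fst h

set_option maxHeartbeats 1600000 in
/-- Let `𝒞` be a 3XOR instance with `n` variables and `m = cn`
equations (`c ≥ 1`) and let `π` be a bijection from `V(G_𝒞)` to `V(G_{homog(𝒞)})` with
`GI(G_𝒞, G_{homog(𝒞)}; π) ≥ 1 − δ`.  With
`A = {i : π(V_{C_i}) = V_{homog(C_{i'})} for some i'}` and
`B = {j : π(V_{x_j}) = V_{x_{j'}} for some j'}`, one has `|A| ≥ (1 − 19δ)m` and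
`|B| ≥ (1 − 95cδ)n`. -/
theorem clique_and_variable_correspondence (n m : ℕ) (c δ : ℝ) (hc : 1 ≤ c)
    (hm : (m : ℝ) = c * n) (hδ : 0 ≤ δ) (𝒞 : XorInstance n m)
    (π : GVert 𝒞 ≃ GVert (homogInst 𝒞))
    (hπ : 1 - δ ≤ GIval (gadgetGraph 𝒞) (gadgetGraph (homogInst 𝒞)) π) :
    (1 - 19 * δ) * m ≤
      ((Finset.univ.filter fun i : Fin m =>
        ∃ i' : Fin m, (VC 𝒞 i).image (fun v => π v) = VC (homogInst 𝒞) i').card : ℝ) ∧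
    (1 - 95 * c * δ) * n ≤
      ((Finset.univ.filter fun j : Fin n =>
        ∃ j' : Fin n, (Vx 𝒞 j).image (fun v => π v) = Vx (homogInst 𝒞) j').card : ℝ) := by
  classical
  set G := gadgetGraph 𝒞 with hG
  set H := gadgetGraph (homogInst 𝒞) with hH
  set bad : Finset (Sym2 (GVert 𝒞)) :=
    (edges G).filter (fun e => ¬ Sym2.map (fun x => π x) e ∈ edges H) with hbaddef
  -- the number of non-preserved edges is at most δ(18m+n)
  have hbadR : (bad.card : ℝ) ≤ δ * ((18 * m + n : ℕ) : ℝ) := by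
    set Mx : ℝ := max ((edges G).card : ℝ) ((edges H).card : ℝ) with hMx
    have hMle : Mx ≤ ((18 * m + n : ℕ) : ℝ) := by
      apply max_le <;> exact_mod_cast card_edges_le _
    have hsplit := Finset.card_filter_add_card_filter_not
      (s := edges G) (p := fun e => Sym2.map (fun x => π x) e ∈ edges H)
    have hMnn : (0 : ℝ) ≤ Mx := le_max_of_le_left (Nat.cast_nonneg _)
    have hcardle : ((edges G).card : ℝ) ≤ Mx := le_max_left _ _
    by_cases hz : Mx = 0
    · have he0 : ((edges G).card : ℝ) = 0 :=
        le_antisymm (hz ▸ hcardle) (Nat.cast_nonneg _)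
      have hbe : (bad.card : ℝ) ≤ 0 := by
        rw [← he0]
        exact_mod_cast Finset.card_filter_le _ _
      exact le_trans hbe (by positivity)
    · have hpos : 0 < Mx := lt_of_le_of_ne hMnn (Ne.symm hz)
      unfold GIval at hπ
      rw [← hMx] at hπ
      have h1 := (le_div_iff₀ hpos).1 hπ
      have h2 : (((edges G).filter fun e =>
            Sym2.map (fun x => π x) e ∈ edges H).card : ℝ) + (bad.card : ℝ)
          = ((edges G).card : ℝ) := by
        rw [hbaddef]
        exact_mod_cast hsplit
      have hd := mul_le_mul_of_nonneg_left hMle hδ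
      set gc : ℝ := ((Finset.filter (fun e => Sym2.map (fun x => π x) e ∈ edges H)
        (edges G)).card : ℝ) with hgc
      rw [Finset.filter_congr_decidable] at h1
      rw [← hgc] at h1
      linarith
  -- Claim A: a bad clique yields a bad clique edge
  have claimA : ∀ i : Fin m,
      (¬ ∃ i' : Fin m, (VC 𝒞 i).image (fun v => π v) = VC (homogInst 𝒞) i') →
      ∃ α β : SatAssign (𝒞 i), α ≠ β ∧
        s(Sum.inr ⟨i, α⟩, Sum.inr ⟨i, β⟩) ∈ bad := by
    intro i hni
    by_contra hno
    push_neg at hno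
    apply hni
    have hcard : ((VC 𝒞 i).image (fun v => π v)).card = 4 := by
      rw [Finset.card_image_of_injective _ π.injective, card_VC]
    have hadjS : ∀ u ∈ (VC 𝒞 i).image (fun v => π v),
        ∀ w ∈ (VC 𝒞 i).image (fun v => π v), u ≠ w → H.Adj u w := by
      intro u hu w hw huw
      obtain ⟨a, ha, rfl⟩ := Finset.mem_image.1 hu
      obtain ⟨b, hb, rfl⟩ := Finset.mem_image.1 hw
      obtain ⟨α, rfl⟩ := (Finset.mem_filter.1 ha).2
      obtain ⟨β, rfl⟩ := (Finset.mem_filter.1 hb).2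
      have hab : α ≠ β := by rintro rfl; exact huw rfl
      have hmem : s(Sum.inr ⟨i, α⟩, (Sum.inr ⟨i, β⟩ : GVert 𝒞)) ∈ edges G :=
        mem_edges.2 ((SimpleGraph.mem_edgeSet _).2 (adj_inr_mk hab))
      have hgood : Sym2.map (fun x => π x)
          s(Sum.inr ⟨i, α⟩, (Sum.inr ⟨i, β⟩ : GVert 𝒞)) ∈ edges H := by
        by_contra hbadmem
        exact hno α β hab (Finset.mem_filter.2 ⟨hmem, hbadmem⟩)
      rw [Sym2.map_pair_eq] at hgood
      exact (SimpleGraph.mem_edgeSet _).1 (mem_edges.1 hgood)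
    exact clique4 (homogInst 𝒞) _ hcard hadjS
  set Abad : Finset (Fin m) := Finset.univ.filter
    (fun i => ¬ ∃ i' : Fin m, (VC 𝒞 i).image (fun v => π v) = VC (homogInst 𝒞) i')
    with hAbaddef
  have hAcount : Abad.card ≤ bad.card := by
    have hgen : ∀ i : Fin m, ∃ e, i ∈ Abad → (e ∈ bad ∧
        ∃ α β : SatAssign (𝒞 i), e = s(Sum.inr ⟨i, α⟩, Sum.inr ⟨i, β⟩)) := by
      intro i
      by_cases hi : i ∈ Abad
      · obtain ⟨α, β, hab, hmem⟩ := claimA i (Finset.mem_filter.1 hi).2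
        exact ⟨_, fun _ => ⟨hmem, α, β, rfl⟩⟩
      · exact ⟨Sym2.diag (Sum.inr ⟨i, (satEquiv (𝒞 i)).symm (0, 0)⟩),
          fun h => absurd h hi⟩
    choose f hf using hgen
    apply Finset.card_le_card_of_injOn f (fun i hi => (hf i hi).1)
    intro i hi i₂ hi₂ heq
    obtain ⟨α, β, he⟩ := (hf i hi).2
    obtain ⟨α₂, β₂, he₂⟩ := (hf i₂ hi₂).2
    rw [he, he₂] at heq
    rcases Sym2.eq_iff.1 heq with ⟨h1, -⟩ | ⟨h1, -⟩ <;> exact inr_index_eq h1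
  -- n ≤ m over ℝ
  have hnn : (0 : ℝ) ≤ (n : ℝ) := Nat.cast_nonneg _
  have hnm : (n : ℝ) ≤ (m : ℝ) := by nlinarith
  have hcast : ((18 * m + n : ℕ) : ℝ) = 18 * (m : ℝ) + (n : ℝ) := by push_cast; ring
  rw [hcast] at hbadR
  constructor
  · -- part A
    have hAsplit := Finset.card_filter_add_card_filter_not
      (s := (Finset.univ : Finset (Fin m)))
      (p := fun i => ∃ i' : Fin m, (VC 𝒞 i).image (fun v => π v) = VC (homogInst 𝒞) i')
    rw [Finset.card_univ, Fintype.card_fin] at hAsplit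
    have h1 : ((Finset.univ.filter fun i : Fin m =>
        ∃ i' : Fin m, (VC 𝒞 i).image (fun v => π v) = VC (homogInst 𝒞) i').card : ℝ)
        + (Abad.card : ℝ) = (m : ℝ) := by exact_mod_cast hAsplit
    have h2 : (Abad.card : ℝ) ≤ (bad.card : ℝ) := by exact_mod_cast hAcount
    nlinarith [mul_nonneg hδ (sub_nonneg.2 hnm)]
  · -- part B
    set Bbad : Finset (Fin n) := Finset.univ.filter
      (fun j => ¬ ∃ j' : Fin n, (Vx 𝒞 j).image (fun v => π v) = Vx (homogInst 𝒞) j')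
      with hBbaddef
    set Leftover : Finset (Fin m) := Finset.univ.filter
      (fun i' => ¬ ∃ i : Fin m, (VC 𝒞 i).image (fun v => π v) = VC (homogInst 𝒞) i')
      with hLeftdef
    have hLeftcount : Leftover.card ≤ Abad.card := by
      have hinj : (Finset.univ.filter (fun i : Fin m =>
            ∃ i' : Fin m, (VC 𝒞 i).image (fun v => π v) = VC (homogInst 𝒞) i')).card ≤
          (Finset.univ.filter (fun i' : Fin m =>
            ∃ i : Fin m, (VC 𝒞 i).image (fun v => π v) = VC (homogInst 𝒞) i')).card := by
        have hgen : ∀ i : Fin m, ∃ i', i ∈ (Finset.univ.filter (fun i : Fin m =>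
            ∃ i' : Fin m, (VC 𝒞 i).image (fun v => π v) = VC (homogInst 𝒞) i')) →
            (VC 𝒞 i).image (fun v => π v) = VC (homogInst 𝒞) i' := by
          intro i
          by_cases hi : i ∈ (Finset.univ.filter (fun i : Fin m =>
            ∃ i' : Fin m, (VC 𝒞 i).image (fun v => π v) = VC (homogInst 𝒞) i'))
          · obtain ⟨i', hi'⟩ := (Finset.mem_filter.1 hi).2
            exact ⟨i', fun _ => hi'⟩
          · exact ⟨i, fun h => absurd h hi⟩
        choose σ hσ using hgen
        apply Finset.card_le_card_of_injOn σ
        · intro i hi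
          exact Finset.mem_filter.2 ⟨Finset.mem_univ _, ⟨i, hσ i hi⟩⟩
        · intro i hi i₂ hi₂ heq
          have ha1 := hσ i hi
          have ha2 := hσ i₂ hi₂
          rw [heq] at ha1
          have himg : (VC 𝒞 i).image (fun v => π v) = (VC 𝒞 i₂).image (fun v => π v) :=
            ha1.trans ha2.symm
          have hVC : VC 𝒞 i = VC 𝒞 i₂ := Finset.image_injective π.injective himg
          have hα : (Sum.inr ⟨i, (satEquiv (𝒞 i)).symm (0, 0)⟩ : GVert 𝒞) ∈ VC 𝒞 i :=
            Finset.mem_filter.2 ⟨Finset.mem_univ _, _, rfl⟩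
          rw [hVC] at hα
          obtain ⟨β, hβ⟩ := (Finset.mem_filter.1 hα).2
          exact inr_index_eq hβ
      have e1 := Finset.card_filter_add_card_filter_not
        (s := (Finset.univ : Finset (Fin m)))
        (p := fun i => ∃ i' : Fin m, (VC 𝒞 i).image (fun v => π v) = VC (homogInst 𝒞) i')
      have e2 := Finset.card_filter_add_card_filter_not
        (s := (Finset.univ : Finset (Fin m)))
        (p := fun i' => ∃ i : Fin m, (VC 𝒞 i).image (fun v => π v) = VC (homogInst 𝒞) i')
      rw [hLeftdef, hAbaddef]
      omega
    -- Claim B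
    have claimB : ∀ j ∈ Bbad, s(Sum.inl (j, (0 : ZMod 2)), (Sum.inl (j, 1) : GVert 𝒞)) ∉ bad →
        ∃ a : ZMod 2, ∃ i' ∈ Leftover, ∃ β : SatAssign ((homogInst 𝒞) i'),
          π (Sum.inl (j, a)) = Sum.inr ⟨i', β⟩ := by
      intro j hj hE
      have hzo : ((0 : ZMod 2)) ≠ 1 := by decide
      have hedge : s(Sum.inl (j, (0 : ZMod 2)), (Sum.inl (j, 1) : GVert 𝒞)) ∈ edges G :=
        mem_edges.2 ((SimpleGraph.mem_edgeSet _).2 (adj_inl_mk hzo))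
      have hpres : Sym2.map (fun x => π x)
          s(Sum.inl (j, (0 : ZMod 2)), (Sum.inl (j, 1) : GVert 𝒞)) ∈ edges H := by
        by_contra hq
        exact hE (Finset.mem_filter.2 ⟨hedge, hq⟩)
      rw [Sym2.map_pair_eq] at hpres
      have hadjH : H.Adj (π (Sum.inl (j, 0))) (π (Sum.inl (j, 1))) :=
        (SimpleGraph.mem_edgeSet _).1 (mem_edges.1 hpres)
      have hBj := (Finset.mem_filter.1 hj).2
      -- helper: an image which is a constraint vertex lands in a leftover clique
      have hland : ∀ (a : ZMod 2) (i' : Fin m) (β : SatAssign ((homogInst 𝒞) i')),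
          π (Sum.inl (j, a)) = Sum.inr ⟨i', β⟩ → i' ∈ Leftover := by
        intro a i' β hπa
        rw [hLeftdef]
        refine Finset.mem_filter.2 ⟨Finset.mem_univ _, ?_⟩
        rintro ⟨i, himg⟩
        have hmem : (Sum.inr ⟨i', β⟩ : GVert (homogInst 𝒞)) ∈ VC (homogInst 𝒞) i' :=
          Finset.mem_filter.2 ⟨Finset.mem_univ _, β, rfl⟩
        rw [← himg] at hmem
        obtain ⟨v, hv, hπv⟩ := Finset.mem_image.1 hmem
        rw [← hπa] at hπv
        have := π.injective hπv
        obtain ⟨α', hα'⟩ := (Finset.mem_filter.1 hv).2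
        rw [hα'] at this
        exact absurd this (by simp)
      rcases h0 : π (Sum.inl (j, 0)) with p0 | q0
      · rcases h1 : π (Sum.inl (j, 1)) with p1 | q1
        · -- both variable vertices: contradiction with j ∈ Bbad
          exfalso
          obtain ⟨j1, b1⟩ := p0
          obtain ⟨j2, b2⟩ := p1
          rw [h0, h1] at hadjH
          obtain ⟨rfl, hb⟩ := adj_inl_inl hadjH
          apply hBj
          refine ⟨j1, ?_⟩
          rw [Vx_eq, Vx_eq]
          rw [Finset.image_insert, Finset.image_singleton, h0, h1]
          have hb2 : ∀ x y : ZMod 2, x ≠ y → ({(Sum.inl (j1, x) : GVert (homogInst 𝒞)),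
              Sum.inl (j1, y)} : Finset (GVert (homogInst 𝒞))) =
              {Sum.inl (j1, 0), Sum.inl (j1, 1)} := by
            intro x y hxy
            have hpairs : ∀ x y : ZMod 2, x ≠ y → x = 0 ∧ y = 1 ∨ x = 1 ∧ y = 0 := by decide
            have hx : x = 0 ∧ y = 1 ∨ x = 1 ∧ y = 0 := hpairs x y hxy
            rcases hx with ⟨rfl, rfl⟩ | ⟨rfl, rfl⟩
            · rfl
            · exact Finset.pair_comm _ _
          exact hb2 b1 b2 hb
        · exact ⟨1, q1.1, hland 1 q1.1 q1.2 (by rw [h1]), q1.2, by rw [h1]⟩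
      · exact ⟨0, q0.1, hland 0 q0.1 q0.2 (by rw [h0]), q0.2, by rw [h0]⟩
    -- counting bad variables
    have hBsplit := Finset.card_filter_add_card_filter_not
      (s := Bbad) (p := fun j => s(Sum.inl (j, (0 : ZMod 2)), (Sum.inl (j, 1) : GVert 𝒞)) ∈ bad)
    have hB1 : (Bbad.filter (fun j =>
        s(Sum.inl (j, (0 : ZMod 2)), (Sum.inl (j, 1) : GVert 𝒞)) ∈ bad)).card ≤ bad.card := by
      apply Finset.card_le_card_of_injOn
        (fun j => s(Sum.inl (j, (0 : ZMod 2)), (Sum.inl (j, 1) : GVert 𝒞)))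
        (fun j hj => (Finset.mem_filter.1 hj).2)
      intro j hj j' hj' heq
      have hzo1 : ((0 : ZMod 2)) ≠ 1 := by decide
      rcases Sym2.eq_iff.1 heq with ⟨hl, -⟩ | ⟨hl, -⟩ <;> injection hl with hl
      · exact congrArg Prod.fst hl
      · exact absurd (congrArg Prod.snd hl) hzo1
    have hB2 : (Bbad.filter (fun j =>
        ¬ s(Sum.inl (j, (0 : ZMod 2)), (Sum.inl (j, 1) : GVert 𝒞)) ∈ bad)).card ≤
        4 * Leftover.card := by
      have hgen : ∀ j : Fin n, ∃ a : ZMod 2, j ∈ Bbad.filter (fun j =>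
          ¬ s(Sum.inl (j, (0 : ZMod 2)), (Sum.inl (j, 1) : GVert 𝒞)) ∈ bad) →
          ∃ i' ∈ Leftover, ∃ β : SatAssign ((homogInst 𝒞) i'),
            π (Sum.inl (j, a)) = Sum.inr ⟨i', β⟩ := by
        intro j
        by_cases hj : j ∈ Bbad.filter (fun j =>
          ¬ s(Sum.inl (j, (0 : ZMod 2)), (Sum.inl (j, 1) : GVert 𝒞)) ∈ bad)
        · obtain ⟨a, ha⟩ := claimB j (Finset.mem_filter.1 hj).1 (Finset.mem_filter.1 hj).2
          exact ⟨a, fun _ => ha⟩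
        · exact ⟨0, fun h => absurd h hj⟩
      choose av hspec using hgen
      have hTcard : (Leftover.biUnion (fun i' => VC (homogInst 𝒞) i')).card ≤
          4 * Leftover.card := by
        refine le_trans Finset.card_biUnion_le ?_
        rw [Finset.sum_congr rfl (fun i' _ => card_VC (homogInst 𝒞) i'), Finset.sum_const,
          smul_eq_mul, mul_comm]
      refine le_trans (Finset.card_le_card_of_injOn (fun j => π (Sum.inl (j, av j))) ?_ ?_) hTcard
      · intro j hj
        obtain ⟨i', hi', β, hβ⟩ := hspec j hj
        show π (Sum.inl (j, av j)) ∈ _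
        rw [hβ]
        exact Finset.mem_biUnion.2 ⟨i', hi', Finset.mem_filter.2 ⟨Finset.mem_univ _, β, rfl⟩⟩
      · intro j hj j' hj' heq
        have := π.injective heq
        injection this with this
        exact congrArg Prod.fst this
    have hBcount : (Bbad.card : ℝ) ≤ 5 * (bad.card : ℝ) := by
      have : Bbad.card ≤ 5 * bad.card := by omega
      exact_mod_cast this
    have hBgood := Finset.card_filter_add_card_filter_not
      (s := (Finset.univ : Finset (Fin n)))
      (p := fun j => ∃ j' : Fin n, (Vx 𝒞 j).image (fun v => π v) = Vx (homogInst 𝒞) j')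
    rw [Finset.card_univ, Fintype.card_fin] at hBgood
    have h1 : ((Finset.univ.filter fun j : Fin n =>
        ∃ j' : Fin n, (Vx 𝒞 j).image (fun v => π v) = Vx (homogInst 𝒞) j').card : ℝ)
        + (Bbad.card : ℝ) = (n : ℝ) := by
      rw [hBbaddef] at hBcount ⊢
      exact_mod_cast hBgood
    nlinarith [mul_nonneg (mul_nonneg (sub_nonneg.2 hc) hδ) hnn]

end Giso
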